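/- arXiv:1403.6974 — 2 statements merged into one kernel-verified Lean document; each statement's English description precedes it below -/
import Mathlib

section
/- Let y = A x + e with x supported on a set 𝒯 of size at most T, and let T̂ be any index set with |T̂| ≤ T. Define x̂ by x̂_{T̂} = A_{T̂}† y and x̂ = 0 off T̂. If A has restricted isometry constant δ_{3T} < 1, then ‖x − x̂‖ ≤ (1/(1−δ_{3T})) ‖x_{T̂ᶜ}‖ + (1/√(1−δ_{3T})) ‖e‖. -/
open Matrix Finset

/-- Euclidean (ℓ2) norm of a finitely-indexed real vector. -/
noncomputable def enorm2 {ι : Type*} [Fintype ι] (x : ι → ℝ) : ℝ :=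
  Real.sqrt (∑ i, x i ^ 2)

/-- `x` is `T`-sparse: it has at most `T` nonzero entries. -/
def sparse {N : ℕ} (T : ℕ) (x : Fin N → ℝ) : Prop :=
  (Finset.univ.filter (fun i => x i ≠ 0)).card ≤ T

/-- Support of a vector as a finset. -/
noncomputable def fsupp {N : ℕ} (x : Fin N → ℝ) : Finset (Fin N) :=
  Finset.univ.filter (fun i => x i ≠ 0)

/-- Restricted isometry property with constant `δ` at sparsity level `T`. -/
def RIP {M N : ℕ} (A : Matrix (Fin M) (Fin N) ℝ) (T : ℕ) (δ : ℝ) : Prop :=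
  ∀ x : Fin N → ℝ, sparse T x →
    (1 - δ) * enorm2 x ^ 2 ≤ enorm2 (A.mulVec x) ^ 2 ∧
    enorm2 (A.mulVec x) ^ 2 ≤ (1 + δ) * enorm2 x ^ 2

/-- Column submatrix of `A` indexed by the finset `𝒯`. -/
def cols {M N : ℕ} (A : Matrix (Fin M) (Fin N) ℝ) (𝒯 : Finset (Fin N)) :
    Matrix (Fin M) 𝒯 ℝ := A.submatrix id (fun i => (i : Fin N))

/-- Pseudo-inverse `(Bᵀ B)⁻¹ Bᵀ` (full column rank assumed where used). -/
noncomputable def pinv {M : ℕ} {ι : Type*} [Fintype ι] [DecidableEq ι]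
    (B : Matrix (Fin M) ι ℝ) : Matrix ι (Fin M) ℝ := (Bᵀ * B)⁻¹ * Bᵀ

/-- `x` restricted to the index set `S` (zero off `S`). -/
def restr {N : ℕ} (x : Fin N → ℝ) (S : Finset (Fin N)) : Fin N → ℝ :=
  fun i => if i ∈ S then x i else 0

/-- Zero-pad a vector indexed by `S` to a full-length vector. -/
noncomputable def scatter {N : ℕ} (S : Finset (Fin N)) (v : S → ℝ) : Fin N → ℝ :=
  fun i => if h : i ∈ S then v ⟨i, h⟩ else 0

/-! ### Auxiliary lemmas -/

section aux
variable {ι : Type*} [Fintype ι]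

lemma enorm_nonneg' (x : ι → ℝ) : 0 ≤ enorm2 x := Real.sqrt_nonneg _

lemma enorm_sq' (x : ι → ℝ) : enorm2 x ^ 2 = ∑ i, x i ^ 2 :=
  Real.sq_sqrt (Finset.sum_nonneg fun _ _ => sq_nonneg _)

lemma le_of_sq_le_sq' {s t : ℝ} (_hs : 0 ≤ s) (ht : 0 ≤ t) (h : s ^ 2 ≤ t ^ 2) : s ≤ t := by
  nlinarith

lemma enorm2_eq_zero' {x : ι → ℝ} (h : enorm2 x = 0) : x = 0 := by
  have h2 : ∑ i, x i ^ 2 = 0 := by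
    have := enorm_sq' x; rw [h] at this; linarith [this.symm]
  funext i
  have := (Finset.sum_eq_zero_iff_of_nonneg (fun i _ => sq_nonneg (x i))).1 h2 i (Finset.mem_univ i)
  exact pow_eq_zero_iff (by norm_num) |>.1 this

lemma dot_le' (a b : ι → ℝ) : dotProduct a b ≤ enorm2 a * enorm2 b := by
  have h := Finset.sum_mul_sq_le_sq_mul_sq Finset.univ a b
  have ha := enorm_nonneg' a; have hb := enorm_nonneg' b
  have ha2 := enorm_sq' a; have hb2 := enorm_sq' b
  unfold dotProduct
  calc ∑ i, a i * b i ≤ |∑ i, a i * b i| := le_abs_self _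
    _ = Real.sqrt ((∑ i, a i * b i) ^ 2) := (Real.sqrt_sq_eq_abs _).symm
    _ ≤ Real.sqrt ((enorm2 a * enorm2 b) ^ 2) := by
        apply Real.sqrt_le_sqrt; rw [mul_pow, ha2, hb2]; exact h
    _ = enorm2 a * enorm2 b := by
        rw [Real.sqrt_sq_eq_abs]; exact abs_of_nonneg (mul_nonneg ha hb)

lemma dot_self' (a : ι → ℝ) : dotProduct a a = enorm2 a ^ 2 := by
  rw [enorm_sq']; unfold dotProduct; exact Finset.sum_congr rfl fun i _ => (sq (a i)).symm

lemma enorm_add_le' (a b : ι → ℝ) : enorm2 (a + b) ≤ enorm2 a + enorm2 b := by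
  have h1 := dot_le' a b
  have key : enorm2 (a + b) ^ 2 ≤ (enorm2 a + enorm2 b) ^ 2 := by
    rw [enorm_sq']
    have : ∑ i, (a + b) i ^ 2 = (∑ i, a i ^ 2) + 2 * dotProduct a b + ∑ i, b i ^ 2 := by
      unfold dotProduct
      rw [Finset.mul_sum, ← Finset.sum_add_distrib, ← Finset.sum_add_distrib]
      exact Finset.sum_congr rfl fun i _ => by simp [Pi.add_apply]; ring
    rw [this, ← enorm_sq' a, ← enorm_sq' b]
    nlinarith
  exact le_of_sq_le_sq' (enorm_nonneg' _) (add_nonneg (enorm_nonneg' a) (enorm_nonneg' b)) key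

lemma enorm_zero' : enorm2 (0 : ι → ℝ) = 0 := by simp [enorm2]

lemma enorm_neg' (a : ι → ℝ) : enorm2 (-a) = enorm2 a := by
  unfold enorm2; congr 1; exact Finset.sum_congr rfl fun i _ => by simp

lemma enorm_sub_le' (a b : ι → ℝ) : enorm2 (a - b) ≤ enorm2 a + enorm2 b := by
  rw [sub_eq_add_neg]
  calc enorm2 (a + -b) ≤ enorm2 a + enorm2 (-b) := enorm_add_le' a (-b)
    _ = enorm2 a + enorm2 b := by rw [enorm_neg']

/-- Polarization identity. -/
lemma pol' (s t : ι → ℝ) :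
    enorm2 (s + t) ^ 2 - enorm2 (s - t) ^ 2 = 4 * dotProduct s t := by
  rw [enorm_sq', enorm_sq']
  unfold dotProduct
  rw [Finset.mul_sum, ← Finset.sum_sub_distrib]
  exact Finset.sum_congr rfl fun i _ => by simp [Pi.add_apply, Pi.sub_apply]; ring

end aux

section aux2
variable {N M : ℕ}

lemma scatter_coe {S : Finset (Fin N)} (v : S → ℝ) (j : S) : scatter S v j = v j := by
  simp [scatter, j.2]

lemma sum_eq_sum_subtype {S : Finset (Fin N)} (f : Fin N → ℝ) (hf : ∀ i ∉ S, f i = 0) :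
    ∑ i, f i = ∑ j : S, f j := by
  rw [← Finset.sum_subtype S (fun x => Iff.rfl) f]
  exact (Finset.sum_subset (Finset.subset_univ S) (fun i _ hi => hf i hi)).symm

lemma enorm_scatter {S : Finset (Fin N)} (v : S → ℝ) : enorm2 (scatter S v) = enorm2 v := by
  unfold enorm2; congr 1
  rw [sum_eq_sum_subtype (S := S) (fun i => scatter S v i ^ 2)
    (fun i hi => by simp [scatter, hi])]
  exact Finset.sum_congr rfl fun j _ => by rw [scatter_coe]

lemma mulVec_scatter {A : Matrix (Fin M) (Fin N) ℝ} {S : Finset (Fin N)} (v : S → ℝ) :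
    A.mulVec (scatter S v) = (cols A S).mulVec v := by
  funext m
  simp only [Matrix.mulVec, dotProduct, cols, Matrix.submatrix_apply, id]
  rw [sum_eq_sum_subtype (S := S) (fun i => A m i * scatter S v i)
    (fun i hi => by simp [scatter, hi])]
  exact Finset.sum_congr rfl fun j _ => by rw [scatter_coe]

lemma dot_colsT {A : Matrix (Fin M) (Fin N) ℝ} {S : Finset (Fin N)}
    (w : S → ℝ) (z : Fin M → ℝ) :
    dotProduct w ((cols A S)ᵀ.mulVec z) = dotProduct ((cols A S).mulVec w) z := by
  rw [dotProduct_mulVec, Matrix.vecMul_transpose]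

lemma quad_id {A : Matrix (Fin M) (Fin N) ℝ} {S : Finset (Fin N)} (w : S → ℝ) :
    dotProduct w (((cols A S)ᵀ * cols A S).mulVec w)
      = enorm2 ((cols A S).mulVec w) ^ 2 := by
  rw [← Matrix.mulVec_mulVec, dot_colsT, dot_self']

/-- A helper to certify sparsity from a support bound. -/
lemma sparse_of_supp {T : ℕ} (v : Fin N → ℝ) (U : Finset (Fin N))
    (h : ∀ i, i ∉ U → v i = 0) (hc : U.card ≤ T) : sparse T v := by
  refine le_trans (Finset.card_le_card ?_) hc
  intro i hi
  simp only [Finset.mem_filter, Finset.mem_univ, true_and] at hi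
  by_contra hiU
  exact hi (h i hiU)

/-- Restricted orthogonality from RIP. -/
lemma rip_orth {T : ℕ} {A : Matrix (Fin M) (Fin N) ℝ} {δ : ℝ} (hδ0 : 0 ≤ δ)
    (hRIP : RIP A (3 * T) δ) (a b : Fin N → ℝ)
    (hdisj : ∀ i, a i = 0 ∨ b i = 0)
    (hsp : ∀ c d : ℝ, sparse (3 * T) (c • a + d • b)) :
    dotProduct (A.mulVec a) (A.mulVec b) ≤ δ * enorm2 a * enorm2 b := by
  by_cases ha : enorm2 a = 0
  · rw [enorm2_eq_zero' ha]
    simp [Matrix.mulVec_zero, enorm_zero']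
  by_cases hb : enorm2 b = 0
  · rw [enorm2_eq_zero' hb]
    simp [Matrix.mulVec_zero, enorm_zero']
  have hPa : 0 < enorm2 a := lt_of_le_of_ne (enorm_nonneg' a) (Ne.symm ha)
  have hPb : 0 < enorm2 b := lt_of_le_of_ne (enorm_nonneg' b) (Ne.symm hb)
  -- norm of disjoint combination
  have hcombo : ∀ c d : ℝ, enorm2 (c • a + d • b) ^ 2 = c ^ 2 * enorm2 a ^ 2 + d ^ 2 * enorm2 b ^ 2 := by
    intro c d
    rw [enorm_sq', enorm_sq', enorm_sq', Finset.mul_sum, Finset.mul_sum, ← Finset.sum_add_distrib]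
    refine Finset.sum_congr rfl fun i _ => ?_
    rcases hdisj i with h | h <;> simp [Pi.add_apply, Pi.smul_apply, h, smul_eq_mul] <;> ring
  have key : ∀ c d : ℝ,
      4 * (c * d * dotProduct (A.mulVec a) (A.mulVec b))
        ≤ 2 * δ * (c ^ 2 * enorm2 a ^ 2 + d ^ 2 * enorm2 b ^ 2) := by
    intro c d
    have h1 := (hRIP _ (hsp c d)).2
    have h2 := (hRIP _ (hsp c (-d))).1
    have e1 : A.mulVec (c • a + d • b) = c • A.mulVec a + d • A.mulVec b := by
      rw [Matrix.mulVec_add, Matrix.mulVec_smul, Matrix.mulVec_smul]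
    have e2 : A.mulVec (c • a + (-d) • b) = c • A.mulVec a - d • A.mulVec b := by
      rw [Matrix.mulVec_add, Matrix.mulVec_smul, Matrix.mulVec_smul, neg_smul, sub_eq_add_neg]
    rw [e1, hcombo c d] at h1
    rw [e2, hcombo c (-d)] at h2
    have hpol := pol' (c • A.mulVec a) (d • A.mulVec b)
    have hdot : dotProduct (c • A.mulVec a) (d • A.mulVec b)
        = c * d * dotProduct (A.mulVec a) (A.mulVec b) := by
      rw [smul_dotProduct, dotProduct_smul, smul_eq_mul, smul_eq_mul]; ring
    rw [hdot] at hpol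
    have hd2 : (-d) ^ 2 = d ^ 2 := by ring
    rw [hd2] at h2
    nlinarith [h1, h2, hpol]
  have hk := key (enorm2 b) (enorm2 a)
  nlinarith [mul_pos hPa hPb, hk]

end aux2

theorem stmt5 {M N T : ℕ} (A : Matrix (Fin M) (Fin N) ℝ) (δ : ℝ)
    (hδ0 : 0 ≤ δ) (hδ1 : δ < 1) (hRIP : RIP A (3 * T) δ)
    (x : Fin N → ℝ) (e y : Fin M → ℝ) (𝒯 That : Finset (Fin N))
    (hsupp : fsupp x ⊆ 𝒯) (h𝒯 : 𝒯.card ≤ T) (hThat : That.card ≤ T)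
    (hy : y = A.mulVec x + e) :
    enorm2 (x - scatter That ((pinv (cols A That)).mulVec y)) ≤
      (1 / (1 - δ)) * enorm2 (restr x Thatᶜ) +
      (1 / Real.sqrt (1 - δ)) * enorm2 e := by
  classical
  have h1δ : (0:ℝ) < 1 - δ := by linarith
  have hT3 : That.card ≤ 3 * T := by omega
  -- notation
  set B := cols A That with hBdef
  set r := restr x Thatᶜ with hrdef
  -- sparsity of scatter
  have hscat_sp : ∀ w : That → ℝ, sparse (3 * T) (scatter That w) := fun w =>
    sparse_of_supp _ That (fun i hi => by simp [scatter, hi]) hT3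
  -- Gram matrix positive definite
  have hGpd : (Bᵀ * B).PosDef := by
    rw [Matrix.posDef_iff_dotProduct_mulVec]
    constructor
    · ext i j
      simp only [Matrix.conjTranspose_apply, Matrix.mul_apply, Matrix.transpose_apply,
        star_trivial]
      exact Finset.sum_congr rfl fun k _ => mul_comm _ _
    · intro v hv
      have hvnorm : 0 < enorm2 v := by
        rcases (enorm_nonneg' v).lt_or_eq with h | h
        · exact h
        · exact absurd (enorm2_eq_zero' h.symm) hv
      have hlow := (hRIP _ (hscat_sp v)).1
      rw [enorm_scatter, mulVec_scatter, ← hBdef] at hlow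
      have hq : dotProduct v ((Bᵀ * B).mulVec v) = enorm2 (B.mulVec v) ^ 2 := quad_id v
      rw [star_trivial]
      rw [hq]
      have := mul_pos h1δ (pow_pos hvnorm 2)
      linarith
  have hGunit : IsUnit (Bᵀ * B).det := hGpd.det_pos.ne'.isUnit
  have hGinv : (Bᵀ * B)⁻¹ * (Bᵀ * B) = 1 := Matrix.nonsing_inv_mul _ hGunit
  have hGinv' : (Bᵀ * B) * (Bᵀ * B)⁻¹ = 1 := Matrix.mul_nonsing_inv _ hGunit
  -- decompose x and y
  have hxsplit : x = restr x That + r := by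
    funext i
    by_cases hi : i ∈ That <;> simp [restr, hrdef, hi]
  have hrestr_scat : restr x That = scatter That (fun j : That => x j) := by
    funext i
    by_cases hi : i ∈ That <;> simp [restr, scatter, hi]
  set xs : That → ℝ := fun j => x j with hxsdef
  have hy' : y = B.mulVec xs + (A.mulVec r + e) := by
    rw [hy]
    nth_rewrite 1 [hxsplit]
    rw [Matrix.mulVec_add, hrestr_scat, mulVec_scatter]
    abel
  -- the estimation error on That
  set u1 : That → ℝ := (Bᵀ * B)⁻¹.mulVec (Bᵀ.mulVec (A.mulVec r)) with hu1def
  set u2 : That → ℝ := (Bᵀ * B)⁻¹.mulVec (Bᵀ.mulVec e) with hu2def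
  have hP : ∀ z : Fin M → ℝ, ((Bᵀ * B)⁻¹ * Bᵀ).mulVec z
      = (Bᵀ * B)⁻¹.mulVec (Bᵀ.mulVec z) := fun z => (Matrix.mulVec_mulVec z _ _).symm
  have hPB : ∀ v : That → ℝ, ((Bᵀ * B)⁻¹ * Bᵀ).mulVec (B.mulVec v) = v := by
    intro v
    rw [Matrix.mulVec_mulVec, Matrix.mul_assoc, hGinv, Matrix.one_mulVec]
  have hpinv : (pinv B).mulVec y = xs + (u1 + u2) := by
    rw [hy', pinv, Matrix.mulVec_add, hPB, hP, Matrix.mulVec_add, Matrix.mulVec_add]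
  -- error decomposition
  have hdiff : x - scatter That ((pinv B).mulVec y) = r - scatter That (u1 + u2) := by
    rw [hpinv]
    funext i
    simp only [Pi.sub_apply]
    by_cases hi : i ∈ That
    · have e1 : scatter That (xs + (u1 + u2)) i = xs ⟨i, hi⟩ + (u1 + u2) ⟨i, hi⟩ := by
        simp [scatter, hi]
      have e2 : scatter That (u1 + u2) i = (u1 + u2) ⟨i, hi⟩ := by
        simp [scatter, hi]
      have e3 : r i = 0 := by simp [hrdef, restr, hi]
      have e4 : xs ⟨i, hi⟩ = x i := rfl
      rw [e1, e2, e3, e4]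
      ring
    · have e1 : scatter That (xs + (u1 + u2)) i = 0 := by simp [scatter, hi]
      have e2 : scatter That (u1 + u2) i = 0 := by simp [scatter, hi]
      have e3 : r i = x i := by simp [hrdef, restr, hi]
      rw [e1, e2, e3]
  -- key: for w = G⁻¹ Bᵀ z,  G w = Bᵀ z and hence ‖Bw‖² = ⟨Bw, z⟩ and (1-δ)‖w‖² ≤ ‖Bw‖²
  have hkey : ∀ z : Fin M → ℝ,
      (1 - δ) * enorm2 ((Bᵀ * B)⁻¹.mulVec (Bᵀ.mulVec z)) ^ 2
        ≤ enorm2 (B.mulVec ((Bᵀ * B)⁻¹.mulVec (Bᵀ.mulVec z))) ^ 2 ∧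
      enorm2 (B.mulVec ((Bᵀ * B)⁻¹.mulVec (Bᵀ.mulVec z))) ^ 2
        = dotProduct (B.mulVec ((Bᵀ * B)⁻¹.mulVec (Bᵀ.mulVec z))) z := by
    intro z
    set w : That → ℝ := (Bᵀ * B)⁻¹.mulVec (Bᵀ.mulVec z) with hwdef
    constructor
    · have hlow := (hRIP _ (hscat_sp w)).1
      rwa [enorm_scatter, mulVec_scatter] at hlow
    · have hGw : (Bᵀ * B).mulVec w = Bᵀ.mulVec z := by
        rw [hwdef, Matrix.mulVec_mulVec, hGinv', Matrix.one_mulVec]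
      have h1 : dotProduct w (Bᵀ.mulVec z)
          = dotProduct (B.mulVec w) z := dot_colsT w z
      have h2 : dotProduct w ((Bᵀ * B).mulVec w) = enorm2 (B.mulVec w) ^ 2 := quad_id w
      rw [← h1, ← hGw, h2]
  -- bound u2
  have hu2bound : enorm2 u2 ≤ (1 / Real.sqrt (1 - δ)) * enorm2 e := by
    obtain ⟨hlow, heq⟩ := hkey e
    rw [← hu2def] at hlow heq
    have hcs : dotProduct (B.mulVec u2) e ≤ enorm2 (B.mulVec u2) * enorm2 e :=
      dot_le' _ _
    have hBe : enorm2 (B.mulVec u2) ≤ enorm2 e := by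
      rcases (enorm_nonneg' (B.mulVec u2)).lt_or_eq with h | h
      · nlinarith [heq, hcs, h]
      · rw [← h]; exact enorm_nonneg' e
    have hsq : Real.sqrt (1 - δ) ^ 2 = 1 - δ := Real.sq_sqrt h1δ.le
    have hsqpos : 0 < Real.sqrt (1 - δ) := Real.sqrt_pos.mpr h1δ
    apply le_of_sq_le_sq' (enorm_nonneg' _)
      (mul_nonneg (by positivity) (enorm_nonneg' e))
    rw [mul_pow, div_pow, one_pow, hsq]
    rw [div_mul_eq_mul_div, le_div_iff₀ h1δ]
    calc enorm2 u2 ^ 2 * (1 - δ) = (1 - δ) * enorm2 u2 ^ 2 := by ring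
      _ ≤ enorm2 (B.mulVec u2) ^ 2 := hlow
      _ ≤ enorm2 e ^ 2 := by nlinarith [hBe, enorm_nonneg' (B.mulVec u2), enorm_nonneg' e]
      _ = 1 * enorm2 e ^ 2 := (one_mul _).symm
  -- bound u1 via restricted orthogonality
  have hu1bound : enorm2 u1 ≤ (δ / (1 - δ)) * enorm2 r := by
    obtain ⟨hlow, heq⟩ := hkey (A.mulVec r)
    rw [← hu1def] at hlow heq
    -- disjoint supports of scatter That u1 and r
    have hdisj : ∀ i, scatter That u1 i = 0 ∨ r i = 0 := by
      intro i
      by_cases hi : i ∈ That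
      · right; simp [hrdef, restr, hi]
      · left; simp [scatter, hi]
    have hsupp_r : ∀ i, i ∉ 𝒯 → r i = 0 := by
      intro i hi
      by_contra hne
      have hx : x i ≠ 0 := by
        simp only [hrdef, restr] at hne
        by_cases h : i ∈ Thatᶜ
        · rw [if_pos h] at hne; exact hne
        · rw [if_neg h] at hne; exact absurd rfl hne
      exact hi (hsupp (by simp [fsupp, hx]))
    have hsp2 : ∀ c d : ℝ, sparse (3 * T) (c • scatter That u1 + d • r) := by
      intro c d
      refine sparse_of_supp _ (That ∪ 𝒯) (fun i hi => ?_) ?_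
      · simp only [Finset.mem_union, not_or] at hi
        have h1 : scatter That u1 i = 0 := by simp [scatter, hi.1]
        have h2 : r i = 0 := hsupp_r i hi.2
        simp [h1, h2]
      · calc (That ∪ 𝒯).card ≤ That.card + 𝒯.card := Finset.card_union_le _ _
          _ ≤ 3 * T := by omega
    have horth := rip_orth hδ0 hRIP (scatter That u1) r hdisj hsp2
    rw [enorm_scatter, mulVec_scatter] at horth
    have heq2 : enorm2 (B.mulVec u1) ^ 2
        ≤ δ * enorm2 u1 * enorm2 r := by rw [heq]; exact horth
    rcases (enorm_nonneg' u1).lt_or_eq with h | h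
    · have : (1 - δ) * enorm2 u1 ^ 2 ≤ δ * enorm2 u1 * enorm2 r := le_trans hlow heq2
      rw [div_mul_eq_mul_div, le_div_iff₀ h1δ]
      nlinarith [this, h]
    · rw [← h]
      exact mul_nonneg (div_nonneg hδ0 h1δ.le) (enorm_nonneg' r)
  -- assemble
  have htri : enorm2 (x - scatter That ((pinv B).mulVec y)) ≤ enorm2 r + (enorm2 u1 + enorm2 u2) := by
    rw [hdiff]
    calc enorm2 (r - scatter That (u1 + u2))
        ≤ enorm2 r + enorm2 (scatter That (u1 + u2)) := enorm_sub_le' _ _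
      _ = enorm2 r + enorm2 (u1 + u2) := by rw [enorm_scatter]
      _ ≤ enorm2 r + (enorm2 u1 + enorm2 u2) := by linarith [enorm_add_le' u1 u2]
  have hfinal : enorm2 r + (δ / (1 - δ)) * enorm2 r = (1 / (1 - δ)) * enorm2 r := by
    field_simp
    ring
  calc enorm2 (x - scatter That ((pinv B).mulVec y))
      ≤ enorm2 r + (enorm2 u1 + enorm2 u2) := htri
    _ ≤ enorm2 r + ((δ / (1 - δ)) * enorm2 r + (1 / Real.sqrt (1 - δ)) * enorm2 e) := by
        linarith [hu1bound, hu2bound]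
    _ = (1 / (1 - δ)) * enorm2 r + (1 / Real.sqrt (1 - δ)) * enorm2 e := by
        linarith [hfinal]
end

section
/- Suppose A has restricted isometry constant δ_{3T} < 1 and y = Ax + e with x being T-sparse with support 𝒯. Let T̂ be a set of T indices, U = T̂ ∪ G for some T-index set G, and suppose 𝒰 ⊇ T̂ with |𝒰| ≤ 3T and A_𝒰 full column rank. Then the least-squares coefficient error satisfies ‖x_𝒰 − A_𝒰† y‖ ≤ (δ_{3T}/(1−δ_{2T})) ‖x_{𝒰ᶜ}‖ + (1/√(1−δ_{2T})) ‖e‖. -/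
open Matrix Finset

lemma enorm2_eq_norm {ι : Type*} [Fintype ι] (x : ι → ℝ) :
    enorm2 x = ‖(WithLp.equiv 2 (ι → ℝ)).symm x‖ := by
  rw [EuclideanSpace.norm_eq, enorm2]
  congr 1
  refine Finset.sum_congr rfl fun i _ => ?_
  rw [Real.norm_eq_abs, sq_abs]
  rfl

lemma enorm2_nonneg {ι : Type*} [Fintype ι] (x : ι → ℝ) : 0 ≤ enorm2 x :=
  Real.sqrt_nonneg _

lemma enorm2_sq {ι : Type*} [Fintype ι] (x : ι → ℝ) :
    enorm2 x ^ 2 = ∑ i, x i ^ 2 := by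
  rw [enorm2, Real.sq_sqrt (Finset.sum_nonneg fun i _ => sq_nonneg _)]

lemma enorm2_add_le {ι : Type*} [Fintype ι] (x y : ι → ℝ) :
    enorm2 (x + y) ≤ enorm2 x + enorm2 y := by
  simp only [enorm2_eq_norm]
  rw [show (WithLp.equiv 2 (ι → ℝ)).symm (x + y) =
    (WithLp.equiv 2 (ι → ℝ)).symm x + (WithLp.equiv 2 (ι → ℝ)).symm y from rfl]
  exact norm_add_le _ _

lemma enorm2_neg {ι : Type*} [Fintype ι] (x : ι → ℝ) : enorm2 (-x) = enorm2 x := by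
  simp [enorm2]

lemma enorm2_smul {ι : Type*} [Fintype ι] (c : ℝ) (x : ι → ℝ) :
    enorm2 (c • x) = |c| * enorm2 x := by
  simp only [enorm2_eq_norm]
  rw [show (WithLp.equiv 2 (ι → ℝ)).symm (c • x) =
    c • (WithLp.equiv 2 (ι → ℝ)).symm x from rfl, norm_smul, Real.norm_eq_abs]

lemma dot_le_enorm {ι : Type*} [Fintype ι] (x y : ι → ℝ) :
    ∑ i, x i * y i ≤ enorm2 x * enorm2 y := by
  simp only [enorm2_eq_norm]
  have := real_inner_le_norm ((WithLp.equiv 2 (ι → ℝ)).symm x) ((WithLp.equiv 2 (ι → ℝ)).symm y)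
  rw [PiLp.inner_apply] at this
  convert this using 2 with i
  simp [mul_comm]

lemma fsupp_scatter {N : ℕ} (S : Finset (Fin N)) (v : S → ℝ) :
    fsupp (scatter S v) ⊆ S := by
  intro i hi
  by_contra h
  simp [fsupp, scatter, h] at hi

lemma cols_mulVec {M N : ℕ} (A : Matrix (Fin M) (Fin N) ℝ) (S : Finset (Fin N))
    (v : S → ℝ) : (cols A S).mulVec v = A.mulVec (scatter S v) := by
  funext i
  simp only [mulVec, dotProduct, cols, submatrix_apply, id_eq]
  have h0 : ∀ j ∈ Finset.univ, j ∉ S → A i j * scatter S v j = 0 := by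
    intro j _ hj; simp [scatter, hj]
  rw [show (∑ j, A i j * scatter S v j) = ∑ j ∈ S, A i j * scatter S v j from
    (Finset.sum_subset (Finset.subset_univ S) h0).symm,
    ← Finset.sum_attach S (fun j => A i j * scatter S v j)]
  exact Finset.sum_congr rfl fun j _ => by simp [scatter, j.2]

lemma enorm2_scatter {N : ℕ} (S : Finset (Fin N)) (v : S → ℝ) :
    enorm2 (scatter S v) = enorm2 v := by
  unfold enorm2
  congr 1
  have h0 : ∀ j ∈ Finset.univ, j ∉ S → scatter S v j ^ 2 = 0 := by
    intro j _ hj; simp [scatter, hj]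
  rw [show (∑ i : Fin N, scatter S v i ^ 2) = ∑ i ∈ S, scatter S v i ^ 2 from
    (Finset.sum_subset (Finset.subset_univ S) h0).symm,
    ← Finset.sum_attach S (fun i => scatter S v i ^ 2)]
  exact Finset.sum_congr rfl fun i _ => by simp [scatter, i.2]

lemma scatter_restr {N : ℕ} (x : Fin N → ℝ) (S : Finset (Fin N)) :
    scatter S (fun i : S => x i) = restr x S := by
  funext i
  simp only [scatter, restr]
  split <;> simp_all

lemma restr_add_restr_compl {N : ℕ} (x : Fin N → ℝ) (S : Finset (Fin N)) :
    restr x S + restr x Sᶜ = x := by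
  funext i
  simp only [Pi.add_apply, restr, Finset.mem_compl]
  by_cases h : i ∈ S <;> simp [h]

lemma dot_mulVec_transpose {M : ℕ} {ι : Type*} [Fintype ι]
    (B : Matrix (Fin M) ι ℝ) (u : ι → ℝ) (w : Fin M → ℝ) :
    ∑ i, (B.mulVec u) i * w i = ∑ j, u j * (Bᵀ.mulVec w) j := by
  have h : (B.mulVec u) ⬝ᵥ w = u ⬝ᵥ (Bᵀ.mulVec w) := by
    rw [Matrix.mulVec_transpose, dotProduct_comm, Matrix.dotProduct_mulVec,
      dotProduct_comm]
  simpa [dotProduct] using h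

lemma enorm2_eq_zero_iff {ι : Type*} [Fintype ι] (x : ι → ℝ) :
    enorm2 x = 0 ↔ x = 0 := by
  rw [enorm2, Real.sqrt_eq_zero (Finset.sum_nonneg fun i _ => sq_nonneg _)]
  constructor
  · intro h
    funext i
    have := (Finset.sum_eq_zero_iff_of_nonneg (fun i _ => sq_nonneg (x i))).1 h i
      (Finset.mem_univ i)
    exact pow_eq_zero_iff (by norm_num) |>.1 this
  · intro h; simp [h]

lemma sparse_of_subset {N T : ℕ} {z : Fin N → ℝ} {W : Finset (Fin N)}
    (h : fsupp z ⊆ W) (hW : W.card ≤ T) : sparse T z :=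
  le_trans (Finset.card_le_card h) hW

lemma fsupp_add {N : ℕ} (u v : Fin N → ℝ) : fsupp (u + v) ⊆ fsupp u ∪ fsupp v := by
  intro i hi
  simp only [fsupp, Finset.mem_filter, Finset.mem_union, Finset.mem_univ, true_and,
    Pi.add_apply] at *
  by_contra h
  push_neg at h
  simp [h.1, h.2] at hi

lemma fsupp_sub {N : ℕ} (u v : Fin N → ℝ) : fsupp (u - v) ⊆ fsupp u ∪ fsupp v := by
  intro i hi
  simp only [fsupp, Finset.mem_filter, Finset.mem_union, Finset.mem_univ, true_and,
    Pi.sub_apply] at *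
  by_contra h
  push_neg at h
  simp [h.1, h.2] at hi

lemma fsupp_smul {N : ℕ} (c : ℝ) (u : Fin N → ℝ) : fsupp (c • u) ⊆ fsupp u := by
  intro i hi
  simp only [fsupp, Finset.mem_filter, Finset.mem_univ, true_and, Pi.smul_apply,
    smul_eq_mul] at *
  exact fun h => hi (by simp [h])

lemma rip_inner_half {M N T : ℕ} (A : Matrix (Fin M) (Fin N) ℝ) (δ : ℝ)
    (hRIP : RIP A (3*T) δ) (u v : Fin N → ℝ) (W : Finset (Fin N))
    (hd : ∀ i, u i = 0 ∨ v i = 0)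
    (hu : fsupp u ⊆ W) (hv : fsupp v ⊆ W) (hW : W.card ≤ 3*T) :
    ∑ i, (A.mulVec u) i * (A.mulVec v) i ≤ δ * (enorm2 u ^ 2 + enorm2 v ^ 2) / 2 := by
  have sp1 : sparse (3*T) (u + v) :=
    sparse_of_subset (le_trans (fsupp_add u v) (Finset.union_subset hu hv)) hW
  have sp2 : sparse (3*T) (u - v) :=
    sparse_of_subset (le_trans (fsupp_sub u v) (Finset.union_subset hu hv)) hW
  have hS1 : enorm2 (u + v) ^ 2 = enorm2 u ^ 2 + enorm2 v ^ 2 := by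
    rw [enorm2_sq, enorm2_sq, enorm2_sq, ← Finset.sum_add_distrib]
    refine Finset.sum_congr rfl fun i _ => ?_
    rcases hd i with h | h <;> simp [h] <;> ring
  have hS2 : enorm2 (u - v) ^ 2 = enorm2 u ^ 2 + enorm2 v ^ 2 := by
    rw [enorm2_sq, enorm2_sq, enorm2_sq, ← Finset.sum_add_distrib]
    refine Finset.sum_congr rfl fun i _ => ?_
    rcases hd i with h | h <;> simp [h] <;> ring
  have key : enorm2 (A.mulVec (u+v)) ^ 2 - enorm2 (A.mulVec (u-v)) ^ 2
      = 4 * ∑ i, (A.mulVec u) i * (A.mulVec v) i := by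
    rw [enorm2_sq, enorm2_sq, ← Finset.sum_sub_distrib, Finset.mul_sum]
    refine Finset.sum_congr rfl fun i _ => ?_
    have h1 : A.mulVec (u + v) i = A.mulVec u i + A.mulVec v i := by
      rw [Matrix.mulVec_add]; rfl
    have h2 : A.mulVec (u - v) i = A.mulVec u i - A.mulVec v i := by
      rw [Matrix.mulVec_sub]; rfl
    rw [h1, h2]; ring
  have b1 := (hRIP (u + v) sp1).2
  have b2 := (hRIP (u - v) sp2).1
  rw [hS1] at b1
  rw [hS2] at b2
  linarith

lemma rip_inner {M N T : ℕ} (A : Matrix (Fin M) (Fin N) ℝ) (δ : ℝ)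
    (hRIP : RIP A (3*T) δ) (u v : Fin N → ℝ) (W : Finset (Fin N))
    (hd : ∀ i, u i = 0 ∨ v i = 0)
    (hu : fsupp u ⊆ W) (hv : fsupp v ⊆ W) (hW : W.card ≤ 3*T) :
    ∑ i, (A.mulVec u) i * (A.mulVec v) i ≤ δ * enorm2 u * enorm2 v := by
  set a := enorm2 u with ha
  set b := enorm2 v with hb
  by_cases ha0 : a = 0
  · have : u = 0 := (enorm2_eq_zero_iff u).1 ha0
    simp [this, ha0, Matrix.mulVec_zero]
  by_cases hb0 : b = 0
  · have : v = 0 := (enorm2_eq_zero_iff v).1 hb0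
    simp [this, hb0, Matrix.mulVec_zero]
  have hap : 0 < a := lt_of_le_of_ne (enorm2_nonneg u) (Ne.symm ha0)
  have hbp : 0 < b := lt_of_le_of_ne (enorm2_nonneg v) (Ne.symm hb0)
  have hd' : ∀ i, (b • u) i = 0 ∨ (a • v) i = 0 := by
    intro i
    rcases hd i with h | h
    · left; simp [h]
    · right; simp [h]
  have hh := rip_inner_half A δ hRIP (b • u) (a • v) W hd'
    (le_trans (fsupp_smul b u) hu) (le_trans (fsupp_smul a v) hv) hW
  have e1 : enorm2 (b • u) = b * a := by rw [enorm2_smul, abs_of_pos hbp]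
  have e2 : enorm2 (a • v) = a * b := by rw [enorm2_smul, abs_of_pos hap]
  have e3 : ∑ i, (A.mulVec (b • u)) i * (A.mulVec (a • v)) i
      = (a * b) * ∑ i, (A.mulVec u) i * (A.mulVec v) i := by
    rw [Finset.mul_sum]
    refine Finset.sum_congr rfl fun i _ => ?_
    rw [Matrix.mulVec_smul, Matrix.mulVec_smul]
    simp only [Pi.smul_apply, smul_eq_mul]
    ring
  rw [e1, e2, e3] at hh
  have hab : 0 < a * b := mul_pos hap hbp
  nlinarith [hh, hab]

theorem stmt13 {M N T : ℕ} (A : Matrix (Fin M) (Fin N) ℝ) (δ₂ δ₃ : ℝ)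
    (hδ0 : 0 ≤ δ₂) (hδ23 : δ₂ ≤ δ₃) (hδ1 : δ₃ < 1)
    (hRIP2 : RIP A (2 * T) δ₂) (hRIP3 : RIP A (3 * T) δ₃)
    (x : Fin N → ℝ) (e y : Fin M → ℝ) (𝒯 That 𝒰 : Finset (Fin N))
    (hsupp : fsupp x ⊆ 𝒯) (h𝒯 : 𝒯.card ≤ T)
    (hThatcard : That.card = T)
    (hG : ∃ G : Finset (Fin N), G.card = T ∧ 𝒰 = That ∪ G)
    (hThat𝒰 : That ⊆ 𝒰) (h𝒰 : 𝒰.card ≤ 3 * T)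
    (hrank : IsUnit ((cols A 𝒰)ᵀ * cols A 𝒰).det)
    (hy : y = A.mulVec x + e) :
    enorm2 ((fun i : 𝒰 => x i) - (pinv (cols A 𝒰)).mulVec y) ≤
      (δ₃ / (1 - δ₂)) * enorm2 (restr x 𝒰ᶜ) +
      (1 / Real.sqrt (1 - δ₂)) * enorm2 e := by
  have hδ2lt1 : δ₂ < 1 := lt_of_le_of_lt hδ23 hδ1
  have hpos : (0:ℝ) < 1 - δ₂ := by linarith
  have hδ30 : 0 ≤ δ₃ := le_trans hδ0 hδ23
  -- card bound on 𝒰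
  have card𝒰2 : 𝒰.card ≤ 2 * T := by
    obtain ⟨G, hGc, hGU⟩ := hG
    calc 𝒰.card = (That ∪ G).card := by rw [hGU]
    _ ≤ That.card + G.card := Finset.card_union_le _ _
    _ = 2 * T := by rw [hThatcard, hGc]; ring
  set B := cols A 𝒰 with hB
  set x𝒰 : 𝒰 → ℝ := fun i : 𝒰 => x i with hx𝒰
  set xc : Fin N → ℝ := restr x 𝒰ᶜ with hxc
  -- lower RIP bound for B
  have ripB : ∀ w : 𝒰 → ℝ, (1 - δ₂) * enorm2 w ^ 2 ≤ enorm2 (B.mulVec w) ^ 2 := by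
    intro w
    rw [hB, cols_mulVec, ← enorm2_scatter 𝒰 w]
    exact (hRIP2 (scatter 𝒰 w)
      (sparse_of_subset (fsupp_scatter 𝒰 w) card𝒰2)).1
  -- inverse bound
  have invB : ∀ z : 𝒰 → ℝ,
      enorm2 ((Bᵀ * B)⁻¹.mulVec z) ≤ enorm2 z / (1 - δ₂) := by
    intro z
    set u : 𝒰 → ℝ := (Bᵀ * B)⁻¹.mulVec z with hu
    have hBtBu : (Bᵀ * B).mulVec u = z := by
      rw [hu, Matrix.mulVec_mulVec, Matrix.mul_nonsing_inv _ hrank, Matrix.one_mulVec]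
    have hBu2 : enorm2 (B.mulVec u) ^ 2 = ∑ j, u j * z j := by
      rw [enorm2_sq]
      calc (∑ i, (B.mulVec u) i ^ 2) = ∑ i, (B.mulVec u) i * (B.mulVec u) i := by
            refine Finset.sum_congr rfl fun i _ => by ring
      _ = ∑ j, u j * (Bᵀ.mulVec (B.mulVec u)) j := dot_mulVec_transpose B u _
      _ = ∑ j, u j * z j := by rw [Matrix.mulVec_mulVec, hBtBu]
    have h1 : (1 - δ₂) * enorm2 u ^ 2 ≤ enorm2 u * enorm2 z := by
      calc (1 - δ₂) * enorm2 u ^ 2 ≤ enorm2 (B.mulVec u) ^ 2 := ripB u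
      _ = ∑ j, u j * z j := hBu2
      _ ≤ enorm2 u * enorm2 z := dot_le_enorm u z
    by_cases hu0 : enorm2 u = 0
    · rw [hu0]
      exact div_nonneg (enorm2_nonneg z) (le_of_lt hpos)
    · have hup : 0 < enorm2 u := lt_of_le_of_ne (enorm2_nonneg u) (Ne.symm hu0)
      rw [le_div_iff₀ hpos]
      nlinarith [h1, hup]
  -- off-diagonal bound
  have offB : enorm2 (Bᵀ.mulVec (A.mulVec xc)) ≤ δ₃ * enorm2 xc := by
    set w : 𝒰 → ℝ := Bᵀ.mulVec (A.mulVec xc) with hw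
    have hd : ∀ i, scatter 𝒰 w i = 0 ∨ xc i = 0 := by
      intro i
      by_cases h : i ∈ 𝒰
      · right; simp [hxc, restr, h]
      · left; simp [scatter, h]
    have hvsupp : fsupp xc ⊆ 𝒰 ∪ 𝒯 := by
      intro i hi
      simp only [fsupp, Finset.mem_filter, Finset.mem_univ, true_and, hxc, restr] at hi
      have hx0 : x i ≠ 0 := by
        intro h
        apply hi
        split <;> simp [h]
      exact Finset.mem_union_right _ (hsupp (Finset.mem_filter.2 ⟨Finset.mem_univ i, hx0⟩))
    have hWcard : (𝒰 ∪ 𝒯).card ≤ 3 * T := by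
      calc (𝒰 ∪ 𝒯).card ≤ 𝒰.card + 𝒯.card := Finset.card_union_le _ _
      _ ≤ 2 * T + T := add_le_add card𝒰2 h𝒯
      _ = 3 * T := by ring
    have key := rip_inner A δ₃ hRIP3 (scatter 𝒰 w) xc (𝒰 ∪ 𝒯) hd
      (le_trans (fsupp_scatter 𝒰 w) (Finset.subset_union_left))
      hvsupp hWcard
    have hw2 : enorm2 w ^ 2 = ∑ i, (A.mulVec (scatter 𝒰 w)) i * (A.mulVec xc) i := by
      rw [enorm2_sq, ← cols_mulVec, ← hB]
      calc (∑ j, w j ^ 2) = ∑ j, w j * w j := by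
            refine Finset.sum_congr rfl fun j _ => by ring
      _ = ∑ j, w j * (Bᵀ.mulVec (A.mulVec xc)) j := by rw [← hw]
      _ = ∑ i, (B.mulVec w) i * (A.mulVec xc) i := (dot_mulVec_transpose B w _).symm
    rw [enorm2_scatter] at key
    rw [← hw2] at key
    by_cases hw0 : enorm2 w = 0
    · rw [hw0]
      exact mul_nonneg (le_trans hδ0 hδ23) (enorm2_nonneg _)
    · have hwp : 0 < enorm2 w := lt_of_le_of_ne (enorm2_nonneg w) (Ne.symm hw0)
      nlinarith [key, hwp]
  -- error-term bound
  have eB : enorm2 ((Bᵀ * B)⁻¹.mulVec (Bᵀ.mulVec e)) ≤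
      (1 / Real.sqrt (1 - δ₂)) * enorm2 e := by
    set u : 𝒰 → ℝ := (Bᵀ * B)⁻¹.mulVec (Bᵀ.mulVec e) with hu
    have hBtBu : (Bᵀ * B).mulVec u = Bᵀ.mulVec e := by
      rw [hu, Matrix.mulVec_mulVec, Matrix.mul_nonsing_inv _ hrank, Matrix.one_mulVec]
    have hBu2 : enorm2 (B.mulVec u) ^ 2 = ∑ i, (B.mulVec u) i * e i := by
      rw [enorm2_sq]
      calc (∑ i, (B.mulVec u) i ^ 2) = ∑ i, (B.mulVec u) i * (B.mulVec u) i := by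
            refine Finset.sum_congr rfl fun i _ => by ring
      _ = ∑ j, u j * (Bᵀ.mulVec (B.mulVec u)) j := dot_mulVec_transpose B u _
      _ = ∑ j, u j * (Bᵀ.mulVec e) j := by rw [Matrix.mulVec_mulVec, hBtBu]
      _ = ∑ i, (B.mulVec u) i * e i := (dot_mulVec_transpose B u e).symm
    have hBuLe : enorm2 (B.mulVec u) ≤ enorm2 e := by
      by_cases h0 : enorm2 (B.mulVec u) = 0
      · rw [h0]; exact enorm2_nonneg e
      · have hp : 0 < enorm2 (B.mulVec u) :=
          lt_of_le_of_ne (enorm2_nonneg _) (Ne.symm h0)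
        have := hBu2 ▸ dot_le_enorm (B.mulVec u) e
        nlinarith [this, hp]
    have husq : enorm2 u ^ 2 ≤ enorm2 e ^ 2 / (1 - δ₂) := by
      have h1 := ripB u
      have h2 : enorm2 (B.mulVec u) ^ 2 ≤ enorm2 e ^ 2 := by
        have := enorm2_nonneg (B.mulVec u)
        nlinarith [hBuLe]
      rw [le_div_iff₀ hpos]
      nlinarith
    calc enorm2 u = Real.sqrt (enorm2 u ^ 2) := (Real.sqrt_sq (enorm2_nonneg u)).symm
    _ ≤ Real.sqrt (enorm2 e ^ 2 / (1 - δ₂)) := Real.sqrt_le_sqrt husq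
    _ = Real.sqrt (enorm2 e ^ 2) / Real.sqrt (1 - δ₂) := Real.sqrt_div (sq_nonneg _) _
    _ = (1 / Real.sqrt (1 - δ₂)) * enorm2 e := by
        rw [Real.sqrt_sq (enorm2_nonneg e)]; ring
  -- decomposition of the error
  have hylem : y = B.mulVec x𝒰 + (A.mulVec xc + e) := by
    rw [hy, hB, cols_mulVec, scatter_restr]
    have := restr_add_restr_compl x 𝒰
    calc A.mulVec x + e = A.mulVec (restr x 𝒰 + restr x 𝒰ᶜ) + e := by rw [this]
    _ = A.mulVec (restr x 𝒰) + (A.mulVec xc + e) := by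
        rw [Matrix.mulVec_add]; abel
  set t1 : 𝒰 → ℝ := (Bᵀ * B)⁻¹.mulVec (Bᵀ.mulVec (A.mulVec xc)) with ht1
  set t2 : 𝒰 → ℝ := (Bᵀ * B)⁻¹.mulVec (Bᵀ.mulVec e) with ht2
  have herr : x𝒰 - (pinv B).mulVec y = -(t1 + t2) := by
    have hpy : (pinv B).mulVec y = x𝒰 + (t1 + t2) := by
      rw [hylem, pinv, Matrix.mulVec_add, Matrix.mulVec_add]
      have hsplit : ∀ v : Fin M → ℝ,
          ((Bᵀ * B)⁻¹ * Bᵀ).mulVec v = (Bᵀ * B)⁻¹.mulVec (Bᵀ.mulVec v) :=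
        fun v => (Matrix.mulVec_mulVec _ _ _).symm
      rw [hsplit, hsplit, hsplit]
      have hid : (Bᵀ * B)⁻¹.mulVec (Bᵀ.mulVec (B.mulVec x𝒰)) = x𝒰 := by
        rw [Matrix.mulVec_mulVec, Matrix.mulVec_mulVec, Matrix.mul_assoc,
          Matrix.nonsing_inv_mul _ hrank, Matrix.one_mulVec]
      rw [hid, ht1, ht2]
    rw [hpy]
    funext i
    simp only [Pi.sub_apply, Pi.add_apply, Pi.neg_apply]
    ring
  rw [herr]
  calc enorm2 (-(t1 + t2)) = enorm2 (t1 + t2) := enorm2_neg _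
  _ ≤ enorm2 t1 + enorm2 t2 := enorm2_add_le t1 t2
  _ ≤ (δ₃ / (1 - δ₂)) * enorm2 xc + (1 / Real.sqrt (1 - δ₂)) * enorm2 e := by
      refine add_le_add ?_ eB
      calc enorm2 t1 ≤ enorm2 (Bᵀ.mulVec (A.mulVec xc)) / (1 - δ₂) := invB _
      _ ≤ (δ₃ * enorm2 xc) / (1 - δ₂) := by gcongr
      _ = (δ₃ / (1 - δ₂)) * enorm2 xc := by ring
end
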